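/- Assume Σ_{p prime} E[|log|a₁|_p|] < ∞, and set φ_p = E[log|a₁|_p] for each prime p. For n ≥ 1 define the rational number q_n := ∏_{p prime} p^{−⌊n φ_p / log p⌋} (a well-defined finite product, since ⌊n φ_p / log p⌋ = 0 for all but finitely many primes p). Then (1/n)·E[⟨A_n^{-1} q_n⟩] → 0 as n → ∞; that is, ⟨A_n^{-1} q_n⟩/n converges to zero in L¹. -/

import Mathlib

open MeasureTheory ProbabilityTheory Filter Topology

/-- `⟨q⟩ = Σ_{p prime} |log |q|_p|` (a finite sum, expressed as a `tsum` over primes). -/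
noncomputable def nad (q : ℚ) : ℝ :=
  ∑' p : Nat.Primes, |Real.log (padicNorm p.1 q : ℝ)|

/-- The integer part of a real number (truncation towards zero). -/
noncomputable def intPart (x : ℝ) : ℤ := if 0 ≤ x then ⌊x⌋ else -⌊-x⌋

lemma abs_floor_sub_le (x : ℝ) (_h : 0 ≤ x) : |(⌊x⌋ : ℝ) - x| ≤ 1 := by
  rw [abs_of_nonpos (by linarith [Int.floor_le x])]
  have := Int.sub_one_lt_floor x
  linarith

lemma abs_intPart_sub_le (x : ℝ) : |(intPart x : ℝ) - x| ≤ 1 := by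
  unfold intPart
  split_ifs with h
  · exact abs_floor_sub_le x h
  · push_cast
    have : -(⌊-x⌋:ℝ) - x = -((⌊-x⌋:ℝ) - (-x)) := by ring
    rw [this, abs_neg]
    exact abs_floor_sub_le (-x) (by linarith [lt_of_not_ge h])

lemma abs_intPart_le (x : ℝ) : |(intPart x : ℝ)| ≤ |x| := by
  unfold intPart
  split_ifs with h
  · rw [abs_of_nonneg h, abs_of_nonneg (by exact_mod_cast Int.floor_nonneg.2 h)]
    exact Int.floor_le x
  · push_cast
    rw [abs_neg, abs_of_neg (lt_of_not_ge h),
      abs_of_nonneg (by exact_mod_cast Int.floor_nonneg.2 (by linarith [lt_of_not_ge h] : (0:ℝ) ≤ -x))]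
    exact Int.floor_le (-x)

lemma one_le_abs_of_intPart_ne_zero {x : ℝ} (h : intPart x ≠ 0) : 1 ≤ |x| := by
  refine le_trans ?_ (abs_intPart_le x)
  exact_mod_cast Int.one_le_abs h

lemma intPart_zero : intPart 0 = 0 := by simp [intPart]

section padic
variable {p : ℕ} [hp : Fact p.Prime]

lemma padicNorm_pos {q : ℚ} (hq : q ≠ 0) : 0 < padicNorm p q :=
  lt_of_le_of_ne (padicNorm.nonneg q) (Ne.symm (padicNorm.nonzero hq))

lemma padicNorm_inv (q : ℚ) : padicNorm p q⁻¹ = (padicNorm p q)⁻¹ := by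
  simpa [one_div, padicNorm.one] using padicNorm.div (p := p) 1 q

lemma padicNorm_prod {ι} (s : Finset ι) (f : ι → ℚ) :
    padicNorm p (∏ i ∈ s, f i) = ∏ i ∈ s, padicNorm p (f i) := by
  classical
  induction s using Finset.induction with
  | empty => simpa using padicNorm.one
  | @insert x s h ih => rw [Finset.prod_insert h, Finset.prod_insert h, padicNorm.mul, ih]

lemma padicNorm_pow (q : ℚ) (n : ℕ) : padicNorm p (q ^ n) = padicNorm p q ^ n := by
  induction n with
  | zero => simpa using padicNorm.one
  | succ n ih => rw [pow_succ, pow_succ, padicNorm.mul, ih]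

lemma padicNorm_zpow (q : ℚ) (e : ℤ) : padicNorm p (q ^ e) = padicNorm p q ^ e := by
  cases e with
  | ofNat n => rw [Int.ofNat_eq_coe, zpow_natCast, zpow_natCast, padicNorm_pow]
  | negSucc n => rw [zpow_negSucc, zpow_negSucc, padicNorm_inv, padicNorm_pow]

end padic


/-- Let `(aₙ, bₙ)` be i.i.d. with values in `ℚ* × ℚ` and assume
`Σ_{p prime} E[|log |a₁|_p|] < ∞`; set `φ_p = E[log |a₁|_p]` and, for `n ≥ 1`,
`q_n = ∏_{p prime} p^{-[n φ_p / log p]}` (a well-defined finite product, expressed with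
`finprod`, since `[n φ_p / log p] = 0` for all but finitely many `p`).  Then
`E[⟨A_n⁻¹ q_n⟩]/n → 0`, i.e. `⟨A_n⁻¹ q_n⟩/n → 0` in `L¹`. -/
theorem statement14
    {Ω : Type*} [MeasureSpace Ω] [IsProbabilityMeasure (ℙ : Measure Ω)]
    (a b : ℕ → Ω → ℚ)
    (hmeas : ∀ n, Measurable fun ω => (a n ω, b n ω))
    (hindep : iIndepFun (fun n ω => (a n ω, b n ω)) ℙ)
    (hident : ∀ n, IdentDistrib (fun ω => (a n ω, b n ω)) (fun ω => (a 0 ω, b 0 ω)) ℙ ℙ)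
    (hne : ∀ n ω, a n ω ≠ 0)
    (hInt : ∀ p : Nat.Primes, Integrable (fun ω => Real.log (padicNorm p.1 (a 0 ω) : ℝ)) ℙ)
    (hSum : Summable fun p : Nat.Primes => ∫ ω, |Real.log (padicNorm p.1 (a 0 ω) : ℝ)| ∂ℙ)
    (φ : Nat.Primes → ℝ)
    (hφ : ∀ p, φ p = ∫ ω, Real.log (padicNorm p.1 (a 0 ω) : ℝ) ∂ℙ)
    (q : ℕ → ℚ)
    (hq : ∀ n, q n = ∏ᶠ p : Nat.Primes, (p.1 : ℚ) ^ (-intPart (n * φ p / Real.log p.1))) :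
    Tendsto (fun n : ℕ =>
        (∫ ω, nad ((∏ k ∈ Finset.range n, a k ω)⁻¹ * q n) ∂ℙ) / n)
      atTop (𝓝 0) := by
  classical
  -- notation
  set X : Nat.Primes → ℕ → Ω → ℝ := fun p k ω => Real.log (padicNorm p.1 (a k ω) : ℝ) with hXdef
  set c : Nat.Primes → ℝ := fun p => ∫ ω, |X p 0 ω| ∂ℙ with hcdef
  have hc0 : ∀ p, 0 ≤ c p := fun p => integral_nonneg fun ω => abs_nonneg _
  set m : ℕ → Nat.Primes → ℤ := fun n p => intPart ((n : ℝ) * φ p / Real.log p.1) with hmdef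
  set S : Nat.Primes → ℕ → Ω → ℝ := fun p n ω => ∑ k ∈ Finset.range n, X p k ω with hSdef
  -- basic facts about primes
  have hppos : ∀ p : Nat.Primes, 0 < Real.log p.1 := by
    intro p
    exact Real.log_pos (by exact_mod_cast p.2.one_lt)
  -- per-prime facts
  have hgmeas : ∀ p : Nat.Primes, Measurable (fun z : ℚ × ℚ => Real.log (padicNorm p.1 z.1 : ℝ)) :=
    fun p => Measurable.of_discrete
  have hXid : ∀ p k, IdentDistrib (X p k) (X p 0) ℙ ℙ := fun p k => (hident k).comp (hgmeas p)
  have hXint : ∀ p k, Integrable (X p k) ℙ := fun p k => (hXid p k).integrable_iff.2 (hInt p)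
  have hXabs : ∀ p k, (∫ ω, |X p k ω| ∂ℙ) = c p := by
    intro p k
    exact ((hXid p k).comp continuous_abs.measurable).integral_eq
  have hφle : ∀ p, |φ p| ≤ c p := by
    intro p
    rw [hφ p]
    calc |∫ ω, X p 0 ω ∂ℙ| ≤ ∫ ω, |X p 0 ω| ∂ℙ := by
          simpa [Real.norm_eq_abs] using
            norm_integral_le_integral_norm (μ := (ℙ : Measure Ω)) (X p 0)
      _ = c p := rfl
  have hSint : ∀ p n, Integrable (S p n) ℙ := fun p n =>
    integrable_finset_sum _ fun k _ => hXint p k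
  have hSabs : ∀ p n, (∫ ω, |S p n ω| ∂ℙ) ≤ n * c p := by
    intro p n
    have h1 : (∫ ω, |S p n ω| ∂ℙ) ≤ ∫ ω, ∑ k ∈ Finset.range n, |X p k ω| ∂ℙ := by
      refine integral_mono ((hSint p n).abs) (integrable_finset_sum _ fun k _ => (hXint p k).abs) ?_
      intro ω
      exact Finset.abs_sum_le_sum_abs _ _
    have h2 : (∫ ω, ∑ k ∈ Finset.range n, |X p k ω| ∂ℙ) = n * c p := by
      rw [integral_finset_sum _ fun k _ => (hXint p k).abs]
      simp [hXabs, Finset.sum_const]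
    linarith
  -- the quantity m n p * log p is controlled
  have hmle : ∀ n p, |(m n p : ℝ) * Real.log p.1| ≤ (n : ℝ) * c p := by
    intro n p
    have hL := hppos p
    have h1 : |(m n p : ℝ)| ≤ |(n : ℝ) * φ p / Real.log p.1| := abs_intPart_le _
    have h2 : |(n : ℝ) * φ p / Real.log p.1| = |(n : ℝ) * φ p| / Real.log p.1 := by
      rw [abs_div, abs_of_pos hL]
    calc |(m n p : ℝ) * Real.log p.1| = |(m n p : ℝ)| * Real.log p.1 := by
          rw [abs_mul, abs_of_pos hL]
      _ ≤ |(n : ℝ) * φ p| / Real.log p.1 * Real.log p.1 := by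
          rw [← h2]; exact mul_le_mul_of_nonneg_right h1 hL.le
      _ = |(n : ℝ) * φ p| := div_mul_cancel₀ _ hL.ne'
      _ = (n : ℝ) * |φ p| := by rw [abs_mul, Nat.abs_cast]
      _ ≤ (n : ℝ) * c p := mul_le_mul_of_nonneg_left (hφle p) (Nat.cast_nonneg n)
  have hmdist : ∀ n p, |(m n p : ℝ) * Real.log p.1 - (n : ℝ) * φ p| ≤ Real.log p.1 := by
    intro n p
    have hL := hppos p
    have hy : ((n : ℝ) * φ p / Real.log p.1) * Real.log p.1 = (n : ℝ) * φ p :=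
      div_mul_cancel₀ _ hL.ne'
    calc |(m n p : ℝ) * Real.log p.1 - (n : ℝ) * φ p|
        = |((m n p : ℝ) - (n : ℝ) * φ p / Real.log p.1) * Real.log p.1| := by
          rw [sub_mul, hy]
      _ = |(m n p : ℝ) - (n : ℝ) * φ p / Real.log p.1| * Real.log p.1 := by
          rw [abs_mul, abs_of_pos hL]
      _ ≤ 1 * Real.log p.1 := mul_le_mul_of_nonneg_right (abs_intPart_sub_le _) hL.le
      _ = Real.log p.1 := one_mul _
  -- finiteness of the support and value of padicNorm p (q n)
  have hqval : ∀ n (p : Nat.Primes), padicNorm p.1 (q n) = (p.1 : ℚ) ^ (m n p) := by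
    intro n p
    haveI : Fact p.1.Prime := ⟨p.2⟩
    have hε : (0:ℝ) < Real.log 2 / (n + 1 : ℝ) :=
      div_pos (Real.log_pos one_lt_two) (by positivity)
    have hfin : {ℓ : Nat.Primes | m n ℓ ≠ 0}.Finite := by
      have hev : ∀ᶠ ℓ in Filter.cofinite, c ℓ < Real.log 2 / (n + 1 : ℝ) :=
        hSum.tendsto_cofinite_zero.eventually (gt_mem_nhds hε)
      refine (Filter.eventually_cofinite.mp hev).subset ?_
      intro ℓ hℓ
      have hL := hppos ℓ
      have h1 : (1:ℝ) ≤ |(n : ℝ) * φ ℓ / Real.log ℓ.1| := one_le_abs_of_intPart_ne_zero hℓ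
      have h2 : Real.log ℓ.1 ≤ (n : ℝ) * |φ ℓ| := by
        rw [abs_div, abs_of_pos hL, abs_mul, Nat.abs_cast] at h1
        have h1' := (le_div_iff₀ hL).1 h1
        linarith
      have h3 : Real.log 2 ≤ Real.log ℓ.1 :=
        Real.log_le_log (by norm_num) (by exact_mod_cast ℓ.2.two_le)
      have h4 : (n:ℝ) * |φ ℓ| ≤ (n:ℝ) * c ℓ :=
        mul_le_mul_of_nonneg_left (hφle ℓ) (Nat.cast_nonneg n)
      have h5 : Real.log 2 ≤ ((n:ℝ) + 1) * c ℓ := by nlinarith [hc0 ℓ]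
      have : Real.log 2 / (n + 1 : ℝ) ≤ c ℓ := by
        rw [div_le_iff₀ (by positivity)]
        linarith
      simpa using not_lt.2 this
    have hsub : (Function.mulSupport fun ℓ : Nat.Primes => (ℓ.1:ℚ) ^ (-(m n ℓ)))
        ⊆ (hfin.toFinset : Finset Nat.Primes) := by
      intro ℓ hℓ
      simp only [Finset.mem_coe, Set.Finite.mem_toFinset, Set.mem_setOf_eq]
      intro h0
      rw [Function.mem_mulSupport] at hℓ
      apply hℓ
      rw [h0]
      simp
    have hqT : q n = ∏ ℓ ∈ hfin.toFinset, (ℓ.1:ℚ) ^ (-(m n ℓ)) := by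
      rw [hq n]
      exact finprod_eq_prod_of_mulSupport_subset _ hsub
    rw [hqT, padicNorm_prod, Finset.prod_eq_single p ?_ ?_]
    · rw [padicNorm_zpow, padicNorm.padicNorm_p_of_prime, inv_zpow, ← zpow_neg, neg_neg]
    · intro ℓ hℓT hℓp
      haveI : Fact ℓ.1.Prime := ⟨ℓ.2⟩
      rw [padicNorm_zpow, padicNorm.padicNorm_of_prime_of_ne
        (fun hcoe => hℓp (Subtype.ext hcoe.symm)), one_zpow]
    · intro hpT
      have h0 : m n p = 0 := by
        have := Set.Finite.mem_toFinset hfin (a := p)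
        simp only [Set.mem_setOf_eq] at this
        by_contra hcon
        exact hpT (this.2 hcon)
      rw [h0]
      simp
  have hqne : ∀ n, q n ≠ 0 := by
    intro n hcon
    have h2 : Fact (Nat.Prime 2) := ⟨Nat.prime_two⟩
    have := hqval n ⟨2, Nat.prime_two⟩
    rw [hcon, padicNorm.zero] at this
    exact (zpow_ne_zero _ (by norm_num : (2:ℚ) ≠ 0)) this.symm
  -- the log decomposition
  have hdecomp : ∀ n (p : Nat.Primes) (ω : Ω),
      Real.log (padicNorm p.1 ((∏ k ∈ Finset.range n, a k ω)⁻¹ * q n) : ℝ)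
        = -(S p n ω) + (m n p : ℝ) * Real.log p.1 := by
    intro n p ω
    haveI : Fact p.1.Prime := ⟨p.2⟩
    have hPne : (∏ k ∈ Finset.range n, a k ω) ≠ 0 :=
      Finset.prod_ne_zero_iff.2 fun k _ => hne k ω
    have hppr : (0:ℚ) < padicNorm p.1 (∏ k ∈ Finset.range n, a k ω) := padicNorm_pos hPne
    have hqpr : (0:ℚ) < padicNorm p.1 (q n) := padicNorm_pos (hqne n)
    have h1 : padicNorm p.1 ((∏ k ∈ Finset.range n, a k ω)⁻¹ * q n)
        = (padicNorm p.1 (∏ k ∈ Finset.range n, a k ω))⁻¹ * padicNorm p.1 (q n) := by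
      rw [padicNorm.mul, padicNorm_inv]
    have h4 : ((padicNorm p.1 (∏ k ∈ Finset.range n, a k ω) : ℚ) : ℝ)⁻¹ ≠ 0 := by
      apply inv_ne_zero
      exact_mod_cast hppr.ne'
    have h5 : ((padicNorm p.1 (q n) : ℚ) : ℝ) ≠ 0 := by exact_mod_cast hqpr.ne'
    have h2 : Real.log ((padicNorm p.1 (∏ k ∈ Finset.range n, a k ω) : ℚ) : ℝ) = S p n ω := by
      rw [padicNorm_prod]
      push_cast
      rw [Real.log_prod (fun k _ => by
        exact_mod_cast (padicNorm_pos (hne k ω)).ne' )]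
    have h3 : Real.log ((padicNorm p.1 (q n) : ℚ) : ℝ) = (m n p : ℝ) * Real.log p.1 := by
      rw [hqval n p]
      push_cast
      rw [Real.log_zpow]
    calc Real.log ((padicNorm p.1 ((∏ k ∈ Finset.range n, a k ω)⁻¹ * q n) : ℚ) : ℝ)
        = Real.log (((padicNorm p.1 (∏ k ∈ Finset.range n, a k ω) : ℚ) : ℝ)⁻¹
            * ((padicNorm p.1 (q n) : ℚ) : ℝ)) := by rw [h1]; push_cast; ring_nf
      _ = Real.log (((padicNorm p.1 (∏ k ∈ Finset.range n, a k ω) : ℚ) : ℝ)⁻¹)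
            + Real.log ((padicNorm p.1 (q n) : ℚ) : ℝ) := Real.log_mul h4 h5
      _ = -(S p n ω) + (m n p : ℝ) * Real.log p.1 := by rw [Real.log_inv, h2, h3]
  -- key per-prime facts for the final assembly
  have key : ∀ p : Nat.Primes,
      (∀ n, Integrable
        (fun ω => |Real.log (padicNorm p.1 ((∏ k ∈ Finset.range n, a k ω)⁻¹ * q n) : ℝ)|) ℙ) ∧
      (∀ n, (∫ ω, |Real.log (padicNorm p.1 ((∏ k ∈ Finset.range n, a k ω)⁻¹ * q n) : ℝ)| ∂ℙ)
          ≤ 2 * n * c p) ∧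
      Tendsto (fun n : ℕ =>
        (∫ ω, |Real.log (padicNorm p.1 ((∏ k ∈ Finset.range n, a k ω)⁻¹ * q n) : ℝ)| ∂ℙ) / n)
        atTop (𝓝 0) := by
    intro p
    haveI : Fact p.1.Prime := ⟨p.2⟩
    have hLpos := hppos p
    have habs : ∀ n, (fun ω => |Real.log (padicNorm p.1
          ((∏ k ∈ Finset.range n, a k ω)⁻¹ * q n) : ℝ)|)
        = fun ω => |-(S p n ω) + (m n p : ℝ) * Real.log p.1| :=
      fun n => funext fun ω => by rw [hdecomp n p ω]
    have hInt' : ∀ n, Integrable (fun ω => |Real.log (padicNorm p.1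
        ((∏ k ∈ Finset.range n, a k ω)⁻¹ * q n) : ℝ)|) ℙ := by
      intro n
      rw [habs n]
      exact ((hSint p n).neg.add (integrable_const _)).abs
    have hIeq : ∀ n, (∫ ω, |Real.log (padicNorm p.1
          ((∏ k ∈ Finset.range n, a k ω)⁻¹ * q n) : ℝ)| ∂ℙ)
        = ∫ ω, |-(S p n ω) + (m n p : ℝ) * Real.log p.1| ∂ℙ := by
      intro n
      rw [habs n]
    have hIb : ∀ n : ℕ, (∫ ω, |Real.log (padicNorm p.1
          ((∏ k ∈ Finset.range n, a k ω)⁻¹ * q n) : ℝ)| ∂ℙ) ≤ 2 * n * c p := by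
      intro n
      rw [hIeq n]
      have hint2 : Integrable (fun ω => |S p n ω| + |(m n p : ℝ) * Real.log p.1|) ℙ :=
        (hSint p n).abs.add (integrable_const _)
      calc (∫ ω, |-(S p n ω) + (m n p : ℝ) * Real.log p.1| ∂ℙ)
          ≤ ∫ ω, (|S p n ω| + |(m n p : ℝ) * Real.log p.1|) ∂ℙ := by
            refine integral_mono (((hSint p n).neg.add (integrable_const _)).abs) hint2 ?_
            intro ω
            calc |-(S p n ω) + (m n p : ℝ) * Real.log p.1|
                ≤ |-(S p n ω)| + |(m n p : ℝ) * Real.log p.1| := abs_add_le _ _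
              _ = |S p n ω| + |(m n p : ℝ) * Real.log p.1| := by rw [abs_neg]
        _ = (∫ ω, |S p n ω| ∂ℙ) + |(m n p : ℝ) * Real.log p.1| := by
            rw [integral_add ((hSint p n).abs) (integrable_const _), integral_const]
            simp
        _ ≤ (n : ℝ) * c p + (n : ℝ) * c p := add_le_add (hSabs p n) (hmle n p)
        _ = 2 * n * c p := by ring
    refine ⟨hInt', hIb, ?_⟩
    -- the law of large numbers
    have hmem : MemLp (X p 0) 1 ℙ := memLp_one_iff_integrable.2 (hInt p)
    have hpair : Pairwise (Function.onFun (IndepFun · · ℙ) (X p)) := by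
      intro i j hij
      exact (hindep.comp (fun _ (z : ℚ × ℚ) => Real.log (padicNorm p.1 z.1 : ℝ))
        (fun _ => hgmeas p)).indepFun hij
    have hlln := strong_law_Lp (le_refl 1) (by norm_num) (X p) hmem hpair (fun i => hXid p i)
    have hYint : ∀ n : ℕ, Integrable (fun ω => (n:ℝ)⁻¹ * S p n ω - φ p) ℙ :=
      fun n => ((hSint p n).const_mul _).sub (integrable_const _)
    have hU : Tendsto (fun n : ℕ => ∫ ω, |(n:ℝ)⁻¹ * S p n ω - φ p| ∂ℙ) atTop (𝓝 0) := by
      have h2 : ∀ n : ℕ, (∫ ω, |(n:ℝ)⁻¹ * S p n ω - φ p| ∂ℙ)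
          = (eLpNorm (fun ω => (n:ℝ)⁻¹ • (∑ i ∈ Finset.range n, X p i ω)
              - (ℙ : Measure Ω)[X p 0]) 1 ℙ).toReal := by
        intro n
        have heq : (fun ω => (n:ℝ)⁻¹ • (∑ i ∈ Finset.range n, X p i ω) - (ℙ : Measure Ω)[X p 0])
            = fun ω => (n:ℝ)⁻¹ * S p n ω - φ p := by
          funext ω
          rw [smul_eq_mul]
          congr 1
          exact (hφ p).symm
        rw [heq, eLpNorm_one_eq_lintegral_enorm,
          ← ofReal_integral_norm_eq_lintegral_enorm (hYint n),
          ENNReal.toReal_ofReal (integral_nonneg fun ω => norm_nonneg _)]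
        simp [Real.norm_eq_abs]
      rw [show (fun n : ℕ => ∫ ω, |(n:ℝ)⁻¹ * S p n ω - φ p| ∂ℙ)
          = fun n : ℕ => (eLpNorm (fun ω => (n:ℝ)⁻¹ • (∑ i ∈ Finset.range n, X p i ω)
              - (ℙ : Measure Ω)[X p 0]) 1 ℙ).toReal from funext h2]
      have := (ENNReal.tendsto_toReal ENNReal.zero_ne_top).comp hlln
      simpa [Function.comp_def] using this
    have hlim : Tendsto (fun n : ℕ => (∫ ω, |(n:ℝ)⁻¹ * S p n ω - φ p| ∂ℙ)
        + Real.log p.1 / n) atTop (𝓝 0) := by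
      simpa using hU.add (tendsto_const_div_atTop_nhds_zero_nat (Real.log p.1))
    refine tendsto_of_tendsto_of_tendsto_of_le_of_le' tendsto_const_nhds hlim ?_ ?_
    · exact Eventually.of_forall fun n =>
        div_nonneg (integral_nonneg fun ω => abs_nonneg _) (Nat.cast_nonneg n)
    · filter_upwards [eventually_ge_atTop 1] with n hn
      have hnpos : (0:ℝ) < n := by exact_mod_cast hn
      have hptw : ∀ ω, |-(S p n ω) + (m n p : ℝ) * Real.log p.1|
          ≤ |S p n ω - n * φ p| + Real.log p.1 := by
        intro ω
        have he : -(S p n ω) + (m n p : ℝ) * Real.log p.1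
            = ((m n p : ℝ) * Real.log p.1 - n * φ p) - (S p n ω - n * φ p) := by ring
        rw [he]
        calc |((m n p : ℝ) * Real.log p.1 - n * φ p) - (S p n ω - n * φ p)|
            ≤ |(m n p : ℝ) * Real.log p.1 - n * φ p| + |S p n ω - n * φ p| := abs_sub _ _
          _ ≤ Real.log p.1 + |S p n ω - n * φ p| := add_le_add_left (hmdist n p) _
          _ = |S p n ω - n * φ p| + Real.log p.1 := add_comm _ _
      have hint1 : Integrable (fun ω => |S p n ω - n * φ p|) ℙ :=
        ((hSint p n).sub (integrable_const _)).abs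
      have h6 : (∫ ω, |-(S p n ω) + (m n p : ℝ) * Real.log p.1| ∂ℙ)
          ≤ (∫ ω, |S p n ω - n * φ p| ∂ℙ) + Real.log p.1 := by
        calc (∫ ω, |-(S p n ω) + (m n p : ℝ) * Real.log p.1| ∂ℙ)
            ≤ ∫ ω, (|S p n ω - n * φ p| + Real.log p.1) ∂ℙ := by
              refine integral_mono (((hSint p n).neg.add (integrable_const _)).abs)
                (hint1.add (integrable_const _)) hptw
          _ = (∫ ω, |S p n ω - n * φ p| ∂ℙ) + Real.log p.1 := by
              rw [integral_add hint1 (integrable_const _), integral_const]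
              simp
      have h7 : (∫ ω, |S p n ω - n * φ p| ∂ℙ)
          = n * ∫ ω, |(n:ℝ)⁻¹ * S p n ω - φ p| ∂ℙ := by
        rw [← integral_const_mul]
        congr 1
        funext ω
        rw [← abs_of_pos hnpos, ← abs_mul]
        congr 1
        field_simp
        rw [abs_of_pos hnpos]
        ring
      rw [hIeq n, div_le_iff₀ hnpos]
      calc (∫ ω, |-(S p n ω) + (m n p : ℝ) * Real.log p.1| ∂ℙ)
          ≤ (∫ ω, |S p n ω - n * φ p| ∂ℙ) + Real.log p.1 := h6
        _ = n * (∫ ω, |(n:ℝ)⁻¹ * S p n ω - φ p| ∂ℙ) + Real.log p.1 := by rw [h7]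
        _ = ((∫ ω, |(n:ℝ)⁻¹ * S p n ω - φ p| ∂ℙ) + Real.log p.1 / n) * n := by
            field_simp
  -- assembly
  have hrw : (fun n : ℕ =>
        (∫ ω, nad ((∏ k ∈ Finset.range n, a k ω)⁻¹ * q n) ∂ℙ) / n)
      = fun n : ℕ => ∑' p : Nat.Primes,
        (∫ ω, |Real.log (padicNorm p.1 ((∏ k ∈ Finset.range n, a k ω)⁻¹ * q n) : ℝ)| ∂ℙ) / n := by
    funext n
    rw [tsum_div_const]
    congr 1
    have := integral_tsum_of_summable_integral_norm (μ := (ℙ : Measure Ω))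
      (F := fun (p : Nat.Primes) (ω : Ω) =>
        |Real.log (padicNorm p.1 ((∏ k ∈ Finset.range n, a k ω)⁻¹ * q n) : ℝ)|)
      (fun p => (key p).1 n) ?_
    · exact this.symm
    · refine Summable.of_nonneg_of_le (f := fun p => 2 * (n:ℝ) * c p)
        (fun p => integral_nonneg fun ω => norm_nonneg _)
        (fun p => ?_) (hSum.mul_left (2 * (n:ℝ)))
      calc (∫ ω, ‖|Real.log (padicNorm p.1 ((∏ k ∈ Finset.range n, a k ω)⁻¹ * q n) : ℝ)|‖ ∂ℙ)
          = ∫ ω, |Real.log (padicNorm p.1 ((∏ k ∈ Finset.range n, a k ω)⁻¹ * q n) : ℝ)| ∂ℙ := by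
            simp [Real.norm_eq_abs, abs_abs]
        _ ≤ 2 * n * c p := (key p).2.1 n
  rw [hrw]
  have h0 : (0 : ℝ) = ∑' _p : Nat.Primes, (0 : ℝ) := by simp
  rw [h0]
  apply tendsto_tsum_of_dominated_convergence (bound := fun p => 2 * c p) (hSum.mul_left 2)
  · exact fun p => (key p).2.2
  · apply Eventually.of_forall
    intro n p
    have hnn : 0 ≤ (∫ ω, |Real.log (padicNorm p.1 ((∏ k ∈ Finset.range n, a k ω)⁻¹ * q n) : ℝ)| ∂ℙ) / n :=
      div_nonneg (integral_nonneg fun ω => abs_nonneg _) (Nat.cast_nonneg n)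
    rw [Real.norm_eq_abs, abs_of_nonneg hnn]
    rcases Nat.eq_zero_or_pos n with hn | hn
    · subst hn
      simp [mul_nonneg (by norm_num : (0:ℝ) ≤ 2) (hc0 p)]
    · have hnpos : (0:ℝ) < n := by exact_mod_cast hn
      rw [div_le_iff₀ hnpos]
      calc (∫ ω, |Real.log (padicNorm p.1 ((∏ k ∈ Finset.range n, a k ω)⁻¹ * q n) : ℝ)| ∂ℙ)
          ≤ 2 * n * c p := (key p).2.1 n
        _ = 2 * c p * n := by ring
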